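/- Let p be a prime and n ≥ 2 an integer that is not a power of p. Write n in base p as n = n_0 + n_1 p + ... + n_k p^k with n_k > 0, and set i = n - p^k. Then 0 < i < n and C(n, i) is not divisible by p. -/

import Mathlib

theorem choose_not_dvd_of_not_pow (p n k : ℕ) (hp : p.Prime) (hn : 2 ≤ n)
    (hnp : ¬ ∃ s : ℕ, n = p ^ s) (hk1 : p ^ k ≤ n) (hk2 : n < p ^ (k + 1)) :
    0 < n - p ^ k ∧ n - p ^ k < n ∧ ¬ p ∣ n.choose (n - p ^ k) := by
  have hplt : p ^ k < n := lt_of_le_of_ne hk1 (fun h => hnp ⟨k, h.symm⟩)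
  have hpos : 0 < n - p ^ k := Nat.sub_pos_of_lt hplt
  have hlt : n - p ^ k < n := Nat.sub_lt (by omega) (pow_pos hp.pos k)
  refine ⟨hpos, hlt, ?_⟩
  rw [← emultiplicity_eq_zero]
  have hle : n - p ^ k ≤ n := Nat.sub_le _ _
  have hb : Nat.log p n < n + 1 := Nat.lt_succ_of_le (Nat.log_le_self p n)
  rw [hp.emultiplicity_choose hle hb, Nat.sub_sub_self hk1]
  rw [Nat.cast_eq_zero]
  rw [Finset.card_eq_zero, Finset.filter_eq_empty_iff]
  intro i hi
  simp only [Finset.mem_Ico] at hi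
  push_neg
  rcases le_or_gt i k with h | h
  · have h1 : p ^ k % p ^ i = 0 := Nat.mod_eq_zero_of_dvd (pow_dvd_pow p h)
    have h2 : (n - p ^ k) % p ^ i < p ^ i := Nat.mod_lt _ (pow_pos hp.pos i)
    omega
  · have h1 : p ^ k % p ^ i = p ^ k :=
      Nat.mod_eq_of_lt (pow_lt_pow_right₀ hp.one_lt h)
    have h2 : (n - p ^ k) % p ^ i ≤ n - p ^ k := Nat.mod_le _ _
    have h3 : n - p ^ k < p ^ i - p ^ k := by
      have : p ^ (k + 1) ≤ p ^ i := pow_le_pow_right₀ hp.one_le h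
      omega
    omega
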